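/- Partition refinement lemma: let S be a set and let {A_i}_{i∈I} and {B_j}_{j∈J} be two partitions of S into nonempty sets such that for each i ∈ I and j ∈ J, the sets A_i and B_j are either disjoint or one is a subset of the other. Then there exist a subset I₀ ⊆ I, a subset J₀ ⊆ J, families {J_i}_{i∈I₀} partitioning J \ J₀ and {I_j}_{j∈J₀} partitioning I \ I₀, such that for each i ∈ I₀, A_i = ⋃_{j∈J_i} B_j, and for each j ∈ J₀, B_j = ⋃_{i∈I_j} A_i. -/
import Mathlib


theorem stmt2 {α ι κ : Type*} (S : Set α) (A : ι → Set α) (B : κ → Set α)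
    (hAne : ∀ i, (A i).Nonempty) (hBne : ∀ j, (B j).Nonempty)
    (hAdisj : Pairwise (Function.onFun Disjoint A))
    (hBdisj : Pairwise (Function.onFun Disjoint B))
    (hAcov : ⋃ i, A i = S) (hBcov : ⋃ j, B j = S)
    (hnest : ∀ i j, Disjoint (A i) (B j) ∨ A i ⊆ B j ∨ B j ⊆ A i) :
    ∃ (I₀ : Set ι) (J₀ : Set κ) (JI : ι → Set κ) (IJ : κ → Set ι),
      (∀ i ∈ I₀, ∀ i' ∈ I₀, i ≠ i' → Disjoint (JI i) (JI i')) ∧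
      (⋃ i ∈ I₀, JI i) = J₀ᶜ ∧
      (∀ j ∈ J₀, ∀ j' ∈ J₀, j ≠ j' → Disjoint (IJ j) (IJ j')) ∧
      (⋃ j ∈ J₀, IJ j) = I₀ᶜ ∧
      (∀ i ∈ I₀, A i = ⋃ j ∈ JI i, B j) ∧
      (∀ j ∈ J₀, B j = ⋃ i ∈ IJ j, A i) := by
  -- If two A's share a point, they are equal indices; similarly for B's.
  have hA : ∀ i i', ((A i) ∩ (A i')).Nonempty → i = i' := by
    intro i i' ⟨x, hx, hx'⟩
    by_contra h
    exact (hAdisj h).ne_of_mem hx hx' rfl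
  have hB : ∀ j j', ((B j) ∩ (B j')).Nonempty → j = j' := by
    intro j j' ⟨x, hx, hx'⟩
    by_contra h
    exact (hBdisj h).ne_of_mem hx hx' rfl
  set I₀ : Set ι := {i | ∀ j, A i ⊆ B j → B j ⊆ A i} with hI₀
  set J₀ : Set κ := {j | ∀ i ∈ I₀, ¬ B j ⊆ A i} with hJ₀
  refine ⟨I₀, J₀, fun i => {j | B j ⊆ A i}, fun j => {i | A i ⊆ B j}, ?_, ?_, ?_, ?_, ?_, ?_⟩
  · intro i _ i' _ hne
    rw [Set.disjoint_left]
    intro j hj hj'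
    exact hne (hA i i' ((hBne j).mono (Set.subset_inter hj hj')))
  · ext j
    simp only [Set.mem_iUnion, Set.mem_setOf_eq, Set.mem_compl_iff, hJ₀]
    push_neg
    constructor
    · rintro ⟨i, hi, hji⟩; exact ⟨i, hi, hji⟩
    · rintro ⟨i, hi, hji⟩; exact ⟨i, hi, hji⟩
  · intro j _ j' _ hne
    rw [Set.disjoint_left]
    intro i hi hi'
    exact hne (hB j j' ((hAne i).mono (Set.subset_inter hi hi')))
  · ext i
    simp only [Set.mem_iUnion, Set.mem_setOf_eq, Set.mem_compl_iff]
    constructor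
    · rintro ⟨j, hj, hij⟩ hiI₀
      exact hj i hiI₀ (hiI₀ j hij)
    · intro hi
      -- i ∉ I₀ : there is j with A i ⊆ B j and ¬ B j ⊆ A i
      simp only [hI₀, Set.mem_setOf_eq] at hi
      push_neg at hi
      obtain ⟨j, hij, hji⟩ := hi
      refine ⟨j, ?_, hij⟩
      intro i' hi' hji'
      -- B j ⊆ A i' with i' ∈ I₀; then A i ⊆ B j ⊆ A i', so i = i', contradiction
      have : i = i' := hA i i' ((hAne i).mono (Set.subset_inter Set.Subset.rfl (hij.trans hji')))
      exact hji (this ▸ hji')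
  · intro i hi
    apply Set.Subset.antisymm
    · intro x hx
      have hxS : x ∈ S := hAcov ▸ Set.mem_iUnion.mpr ⟨i, hx⟩
      obtain ⟨j, hj⟩ := Set.mem_iUnion.mp (hBcov ▸ hxS)
      refine Set.mem_iUnion₂.mpr ⟨j, ?_, hj⟩
      rcases hnest i j with h | h | h
      · exact absurd rfl (h.ne_of_mem hx hj)
      · exact hi j h
      · exact h
    · exact Set.iUnion₂_subset fun j hj => hj
  · intro j hj
    apply Set.Subset.antisymm
    · intro x hx
      have hxS : x ∈ S := hBcov ▸ Set.mem_iUnion.mpr ⟨j, hx⟩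
      obtain ⟨i, hi⟩ := Set.mem_iUnion.mp (hAcov ▸ hxS)
      refine Set.mem_iUnion₂.mpr ⟨i, ?_, hi⟩
      rcases hnest i j with h | h | h
      · exact absurd rfl (h.ne_of_mem hi hx)
      · exact h
      · -- B j ⊆ A i; since j ∈ J₀, i ∉ I₀, so A i ⊂ some B j', forcing j = j', contra
        exfalso
        by_cases hiI : i ∈ I₀
        · exact hj i hiI h
        · simp only [hI₀, Set.mem_setOf_eq] at hiI
          push_neg at hiI
          obtain ⟨j', hij', hji'⟩ := hiI
          have : j = j' := hB j j' ((hBne j).mono (Set.subset_inter Set.Subset.rfl (h.trans hij')))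
          exact hji' (this ▸ h)
    · exact Set.iUnion₂_subset fun i hi => hi
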